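/- Let X, Y, Z be finite index types, let Φ₀, Φ₁ : Matrix X X ℂ →ₗ[ℂ] Matrix Y Y ℂ be quantum channels, and let ρ be a separable density operator on X × Z. Then there exists a density operator σ on X such that ‖((Φ₀ − Φ₁) ⊗ id_Z)(ρ)‖₁ ≤ ‖Φ₀(σ) − Φ₁(σ)‖₁. (In other words, the maximum of ‖((Φ₀ − Φ₁) ⊗ id_Z)(ρ)‖₁ over separable density operators ρ equals ‖Φ₀ − Φ₁‖_NE: an ancillary system is useless for channel discrimination unless it is entangled with the input.) -/

import Mathlib

open Matrix Kronecker BigOperators ComplexOrder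

/-- The positive semidefinite square root `Matrix.PosSemidef.sqrt` of the older Mathlib,
spelled out (it was removed from Mathlib). -/
noncomputable def Matrix.PosSemidef.sqrt {n : Type*} [Fintype n] [DecidableEq n]
    {A : Matrix n n ℂ} (hA : A.PosSemidef) : Matrix n n ℂ :=
  hA.1.eigenvectorUnitary.1 * diagonal ((↑) ∘ (√·) ∘ hA.1.eigenvalues) *
  (star hA.1.eigenvectorUnitary : Matrix n n ℂ)

noncomputable def traceNorm {n : Type*} [Fintype n] [DecidableEq n] (A : Matrix n n ℂ) : ℝ :=
  ((Matrix.posSemidef_conjTranspose_mul_self A).sqrt.trace).re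

def IsDensity {n : Type*} [Fintype n] (ρ : Matrix n n ℂ) : Prop :=
  ρ.PosSemidef ∧ ρ.trace = 1

def tensorId {X Y Z : Type*} (Φ : Matrix X X ℂ → Matrix Y Y ℂ)
    (ρ : Matrix (X × Z) (X × Z) ℂ) : Matrix (Y × Z) (Y × Z) ℂ :=
  Matrix.of fun p q => Φ (Matrix.of fun x x' => ρ (x, p.2) (x', q.2)) p.1 q.1

noncomputable def ChoiMatrix {X Y : Type*} [Fintype X] [DecidableEq X] [Fintype Y]
    (Φ : Matrix X X ℂ → Matrix Y Y ℂ) : Matrix (Y × X) (Y × X) ℂ :=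
  ∑ j : X, ∑ k : X, (Φ (Matrix.single j k 1)) ⊗ₖ (Matrix.single j k 1)

def IsChannel {X Y : Type*} [Fintype X] [DecidableEq X] [Fintype Y]
    (Φ : Matrix X X ℂ →ₗ[ℂ] Matrix Y Y ℂ) : Prop :=
  (∀ M, (Φ M).trace = M.trace) ∧ (ChoiMatrix (⇑Φ)).PosSemidef

def SeparableOp {Y Z : Type*} [Fintype Y] [Fintype Z]
    (P : Matrix (Y × Z) (Y × Z) ℂ) : Prop :=
  ∃ (N : ℕ) (Q : Fin N → Matrix Y Y ℂ) (R : Fin N → Matrix Z Z ℂ),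
    (∀ i, (Q i).PosSemidef) ∧ (∀ i, (R i).PosSemidef) ∧ P = ∑ i, Q i ⊗ₖ R i

def partialTranspose {Y Z : Type*} (M : Matrix (Y × Z) (Y × Z) ℂ) :
    Matrix (Y × Z) (Y × Z) ℂ :=
  Matrix.of fun p q => M (p.1, q.2) (q.1, p.2)

def IsPPT {Y Z : Type*} [Fintype Y] [Fintype Z] (M : Matrix (Y × Z) (Y × Z) ℂ) : Prop :=
  M.PosSemidef ∧ (partialTranspose M).PosSemidef

section AuxTraceNorm

set_option linter.unusedSectionVars false

variable {n m : Type*} [Fintype n] [DecidableEq n] [Fintype m] [DecidableEq m]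

open scoped MatrixOrder in
lemma Matrix.PosSemidef.sqrt_eq_cfcSqrt {A : Matrix n n ℂ} (hA : A.PosSemidef) :
    hA.sqrt = CFC.sqrt A := by
  rw [CFC.sqrt_eq_cfc, cfc_nnreal_eq_real _ A, hA.1.cfc_eq]
  simp only [IsHermitian.cfc, Matrix.PosSemidef.sqrt, Unitary.conjStarAlgAut_apply]
  congr 2
  ext i j
  simp only [diagonal_apply, Function.comp_apply]
  split_ifs
  · simp [Real.coe_sqrt, Real.coe_toNNReal _ (hA.eigenvalues_nonneg i)]
  · rfl

open scoped MatrixOrder in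
lemma Matrix.PosSemidef.posSemidef_sqrt {A : Matrix n n ℂ} (hA : A.PosSemidef) :
    hA.sqrt.PosSemidef := by
  rw [hA.sqrt_eq_cfcSqrt]
  exact (CFC.sqrt_nonneg A).posSemidef

open scoped MatrixOrder in
lemma Matrix.PosSemidef.sq_sqrt {A : Matrix n n ℂ} (hA : A.PosSemidef) :
    hA.sqrt ^ 2 = A := by
  rw [hA.sqrt_eq_cfcSqrt]
  exact CFC.sq_sqrt A hA.nonneg

open scoped MatrixOrder in
lemma Matrix.PosSemidef.eq_sqrt_of_sq_eq {B : Matrix n n ℂ} (hB : B.PosSemidef)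
    {A : Matrix n n ℂ} (hA : A.PosSemidef) (h : B ^ 2 = A) : B = hA.sqrt := by
  rw [hA.sqrt_eq_cfcSqrt, eq_comm, CFC.sqrt_eq_iff A B hA.nonneg hB.nonneg, ← pow_two, h]

lemma herm_trace_real {A : Matrix n n ℂ} (hA : A.IsHermitian) :
    A.trace = (A.trace.re : ℂ) := by
  have h := Matrix.trace_conjTranspose A
  rw [hA.eq] at h
  exact (Complex.conj_eq_iff_re.mp h.symm).symm

noncomputable def conjDiag {A : Matrix n n ℂ} (hA : A.IsHermitian) (g : n → ℝ) : Matrix n n ℂ :=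
  (hA.eigenvectorUnitary : Matrix n n ℂ) * Matrix.diagonal (fun i => (g i : ℂ)) *
    (star (hA.eigenvectorUnitary : Matrix n n ℂ))

lemma conjDiag_mul {A : Matrix n n ℂ} (hA : A.IsHermitian) (g h : n → ℝ) :
    conjDiag hA g * conjDiag hA h = conjDiag hA (fun i => g i * h i) := by
  unfold conjDiag
  set u := (hA.eigenvectorUnitary : Matrix n n ℂ) with hu
  have h1 : star u * u = 1 := Unitary.coe_star_mul_self _
  calc (u * Matrix.diagonal (fun i => (g i : ℂ)) * star u) *
        (u * Matrix.diagonal (fun i => (h i : ℂ)) * star u)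
      = u * (Matrix.diagonal (fun i => (g i : ℂ)) * ((star u * u) *
          (Matrix.diagonal (fun i => (h i : ℂ)) * star u))) := by
        simp only [Matrix.mul_assoc]
    _ = u * (Matrix.diagonal (fun i => (g i : ℂ)) * Matrix.diagonal (fun i => (h i : ℂ))) * star u := by
        rw [h1, Matrix.one_mul]; simp only [Matrix.mul_assoc]
    _ = u * Matrix.diagonal (fun i => ((g i * h i : ℝ) : ℂ)) * star u := by
        rw [Matrix.diagonal_mul_diagonal]
        push_cast
        rfl

lemma conjDiag_posSemidef {A : Matrix n n ℂ} (hA : A.IsHermitian) {g : n → ℝ}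
    (hg : ∀ i, 0 ≤ g i) : (conjDiag hA g).PosSemidef := by
  have hD : (Matrix.diagonal (fun i => (g i : ℂ))).PosSemidef := by
    rw [Matrix.posSemidef_diagonal_iff]
    intro i
    exact_mod_cast Complex.zero_le_real.mpr (hg i)
  simpa [Matrix.star_eq_conjTranspose, conjDiag] using
    hD.mul_mul_conjTranspose_same (hA.eigenvectorUnitary : Matrix n n ℂ)

lemma trace_conjDiag {A : Matrix n n ℂ} (hA : A.IsHermitian) (g : n → ℝ) :
    (conjDiag hA g).trace = ∑ i, (g i : ℂ) := by
  unfold conjDiag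
  rw [Matrix.trace_mul_cycle, Unitary.coe_star_mul_self, Matrix.one_mul, Matrix.trace_diagonal]

lemma conjDiag_eigenvalues {A : Matrix n n ℂ} (hA : A.IsHermitian) :
    conjDiag hA hA.eigenvalues = A := by
  unfold conjDiag
  exact (hA.spectral_theorem).symm

lemma traceNorm_hermitian {A : Matrix n n ℂ} (hA : A.IsHermitian) :
    traceNorm A = ∑ i, |hA.eigenvalues i| := by
  have hS : (conjDiag hA (fun i => |hA.eigenvalues i|)).PosSemidef :=
    conjDiag_posSemidef hA (fun i => abs_nonneg _)
  have hsq : conjDiag hA (fun i => |hA.eigenvalues i|) ^ 2 = Aᴴ * A := by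
    rw [pow_two, conjDiag_mul]
    have : (fun i => |hA.eigenvalues i| * |hA.eigenvalues i|)
        = fun i => hA.eigenvalues i * hA.eigenvalues i := by
      funext i; rw [abs_mul_abs_self]
    rw [this, ← conjDiag_mul, conjDiag_eigenvalues, hA.eq]
  have := hS.eq_sqrt_of_sq_eq (Matrix.posSemidef_conjTranspose_mul_self A) hsq
  rw [traceNorm, ← this, trace_conjDiag]
  push_cast
  simp

lemma key_bound {A K : Matrix n n ℂ} (hA : A.IsHermitian) (hK : K.IsHermitian)
    {s : n → ℝ} (hs : ∀ i, |s i| ≤ 1) :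
    ((conjDiag hA s * K).trace).re ≤ traceNorm K := by
  rw [traceNorm_hermitian hK]
  set u := (hA.eigenvectorUnitary : Matrix n n ℂ) with hu
  set v := (hK.eigenvectorUnitary : Matrix n n ℂ) with hv
  set w := star u * v with hw
  have huu' : u * star u = 1 := Unitary.coe_mul_star_self _
  have hvv' : v * star v = 1 := Unitary.coe_mul_star_self _
  have hvv : star v * v = 1 := Unitary.coe_star_mul_self _
  set Ds := Matrix.diagonal (fun i => (s i : ℂ)) with hDs
  set E := Matrix.diagonal (fun i => (hK.eigenvalues i : ℂ)) with hE
  set M := star w * Ds * w with hM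
  have hsw : star w = star v * u := by rw [hw, StarMul.star_mul, star_star]
  have hC : conjDiag hA s = v * M * star v := by
    rw [hM, hsw, hw]
    have e1 : v * (star v * u * Ds * (star u * v)) * star v
        = v * (star v * (u * (Ds * (star u * (v * star v))))) := by
      simp only [Matrix.mul_assoc]
    rw [e1, hvv', Matrix.mul_one, ← Matrix.mul_assoc, hvv', Matrix.one_mul]
    unfold conjDiag
    simp only [Matrix.mul_assoc]
    rfl
  have hKdec : K = v * E * star v := hK.spectral_theorem
  have htr : (conjDiag hA s * K).trace = (M * E).trace := by
    rw [hC]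
    conv_lhs => rw [hKdec]
    have e2 : v * M * star v * (v * E * star v) = v * (M * E) * star v := by
      calc v * M * star v * (v * E * star v)
          = v * (M * ((star v * v) * (E * star v))) := by simp only [Matrix.mul_assoc]
        _ = v * (M * (E * star v)) := by rw [hvv, Matrix.one_mul]
        _ = v * (M * E) * star v := by simp only [Matrix.mul_assoc]
    rw [e2, Matrix.trace_mul_cycle, ← Matrix.mul_assoc, hvv, Matrix.one_mul]
  rw [htr]
  have trME : (M * E).trace = ∑ i, M i i * (hK.eigenvalues i : ℂ) := by
    simp [Matrix.trace, hE, Matrix.mul_diagonal, Matrix.diag]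
  have hMii : ∀ i, M i i = ((∑ j, s j * Complex.normSq (w j i) : ℝ) : ℂ) := by
    intro i
    rw [hM, Matrix.mul_assoc, Matrix.mul_apply]
    push_cast
    apply Finset.sum_congr rfl
    intro j _
    rw [Matrix.star_apply, hDs, Matrix.diagonal_mul, Complex.normSq_eq_conj_mul_self]
    simp only [Complex.star_def]
    ring
  have hww : star w * w = 1 := by
    rw [hsw, hw]
    calc star v * u * (star u * v) = star v * ((u * star u) * v) := by simp only [Matrix.mul_assoc]
      _ = 1 := by rw [huu', Matrix.one_mul, hvv]
  have hcol : ∀ i, ∑ j, Complex.normSq (w j i) = 1 := by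
    intro i
    have h1 : (star w * w) i i = 1 := by rw [hww]; simp
    rw [Matrix.mul_apply] at h1
    simp only [Matrix.star_apply] at h1
    have : ∑ j, (Complex.normSq (w j i) : ℂ) = 1 := by
      rw [← h1]
      congr 1; funext j
      rw [Complex.normSq_eq_conj_mul_self]
      simp [Complex.star_def]
    exact_mod_cast this
  rw [trME]
  rw [Complex.re_sum]
  apply Finset.sum_le_sum
  intro i _
  rw [hMii i]
  have : ((((∑ j, s j * Complex.normSq (w j i) : ℝ)) : ℂ) * ((hK.eigenvalues i : ℝ) : ℂ)).re
      = (∑ j, s j * Complex.normSq (w j i)) * hK.eigenvalues i := by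
    rw [← Complex.ofReal_mul, Complex.ofReal_re]
  rw [this]
  have hb : |∑ j, s j * Complex.normSq (w j i)| ≤ 1 := by
    calc |∑ j, s j * Complex.normSq (w j i)| ≤ ∑ j, |s j * Complex.normSq (w j i)| :=
          Finset.abs_sum_le_sum_abs _ _
      _ ≤ ∑ j, Complex.normSq (w j i) := by
          apply Finset.sum_le_sum
          intro j _
          rw [abs_mul, abs_of_nonneg (Complex.normSq_nonneg _)]
          exact mul_le_of_le_one_left (Complex.normSq_nonneg _) (hs j)
      _ = 1 := hcol i
  calc (∑ j, s j * Complex.normSq (w j i)) * hK.eigenvalues i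
      ≤ |(∑ j, s j * Complex.normSq (w j i)) * hK.eigenvalues i| := le_abs_self _
    _ = |∑ j, s j * Complex.normSq (w j i)| * |hK.eigenvalues i| := abs_mul _ _
    _ ≤ 1 * |hK.eigenvalues i| := by
        exact mul_le_mul_of_nonneg_right hb (abs_nonneg _)
    _ = |hK.eigenvalues i| := one_mul _

lemma traceNorm_nonneg' {A : Matrix n n ℂ} (hA : A.IsHermitian) : 0 ≤ traceNorm A := by
  rw [traceNorm_hermitian hA]
  exact Finset.sum_nonneg fun i _ => abs_nonneg _

lemma traceNorm_sign_attained {A : Matrix n n ℂ} (hA : A.IsHermitian) :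
    ((conjDiag hA (fun i => if 0 ≤ hA.eigenvalues i then 1 else -1) * A).trace).re
      = traceNorm A := by
  have step : ((conjDiag hA (fun i => if 0 ≤ hA.eigenvalues i then 1 else -1) *
      conjDiag hA hA.eigenvalues).trace).re
      = ((conjDiag hA (fun i => if 0 ≤ hA.eigenvalues i then 1 else -1) * A).trace).re := by
    rw [conjDiag_eigenvalues hA]
  rw [← step, conjDiag_mul, traceNorm_hermitian hA]
  have : (fun i => (if 0 ≤ hA.eigenvalues i then (1:ℝ) else -1) * hA.eigenvalues i)
      = fun i => |hA.eigenvalues i| := by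
    funext i
    by_cases h : 0 ≤ hA.eigenvalues i
    · simp [h, abs_of_nonneg h]
    · simp [h, abs_of_neg (lt_of_not_ge h)]
  rw [this, trace_conjDiag]
  push_cast
  simp

lemma traceNorm_sum_le {ι : Type*} (t : Finset ι) (H : ι → Matrix n n ℂ)
    (hH : ∀ i ∈ t, (H i).IsHermitian) :
    traceNorm (∑ i ∈ t, H i) ≤ ∑ i ∈ t, traceNorm (H i) := by
  have hA : (∑ i ∈ t, H i).IsHermitian := by
    show _ᴴ = _
    rw [Matrix.conjTranspose_sum]
    exact Finset.sum_congr rfl (fun i hi => (hH i hi).eq)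
  set s : n → ℝ := fun i => if 0 ≤ hA.eigenvalues i then 1 else -1 with hsdef
  have hsb : ∀ i, |s i| ≤ 1 := by
    intro i; rw [hsdef]; dsimp only; split <;> simp
  calc traceNorm (∑ i ∈ t, H i) = ((conjDiag hA s * ∑ i ∈ t, H i).trace).re :=
        (traceNorm_sign_attained hA).symm
    _ = ∑ i ∈ t, ((conjDiag hA s * H i).trace).re := by
        rw [Matrix.mul_sum, Matrix.trace_sum, Complex.re_sum]
    _ ≤ ∑ i ∈ t, traceNorm (H i) :=
        Finset.sum_le_sum fun i hi => key_bound hA (hH i hi) hsb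

lemma traceNorm_of_posSemidef {A : Matrix n n ℂ} (hA : A.PosSemidef) :
    traceNorm A = A.trace.re := by
  have h : A = (Matrix.posSemidef_conjTranspose_mul_self A).sqrt :=
    hA.eq_sqrt_of_sq_eq _ (by rw [pow_two, hA.1.eq])
  rw [traceNorm, ← h]

lemma posSemidef_smul_real {A : Matrix n n ℂ} (hA : A.PosSemidef) {c : ℝ} (hc : 0 ≤ c) :
    ((c:ℂ) • A).PosSemidef := by
  exact hA.smul (Complex.zero_le_real.mpr hc)

lemma traceNorm_smul_real (A : Matrix n n ℂ) {c : ℝ} (hc : 0 ≤ c) :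
    traceNorm ((c:ℂ) • A) = c * traceNorm A := by
  set S := (Matrix.posSemidef_conjTranspose_mul_self A).sqrt with hSdef
  have hS : S.PosSemidef := (Matrix.posSemidef_conjTranspose_mul_self A).posSemidef_sqrt
  have h1 : ((c:ℂ) • S).PosSemidef := posSemidef_smul_real hS hc
  have h2 : ((c:ℂ) • S) ^ 2 = ((c:ℂ) • A)ᴴ * ((c:ℂ) • A) := by
    rw [smul_pow, Matrix.conjTranspose_smul, Matrix.smul_mul, Matrix.mul_smul, smul_smul,
      hSdef, (Matrix.posSemidef_conjTranspose_mul_self A).sq_sqrt]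
    congr 1
    simp [Complex.star_def, Complex.conj_ofReal, pow_two]
  have h3 := h1.eq_sqrt_of_sq_eq (Matrix.posSemidef_conjTranspose_mul_self ((c:ℂ) • A)) h2
  rw [traceNorm, ← h3, Matrix.trace_smul, smul_eq_mul, Complex.re_ofReal_mul]
  rfl

lemma conjTranspose_kronecker (A : Matrix n n ℂ) (B : Matrix m m ℂ) :
    (A ⊗ₖ B)ᴴ = Aᴴ ⊗ₖ Bᴴ := by
  ext ⟨i, j⟩ ⟨k, l⟩
  simp [Matrix.conjTranspose_apply, star_mul']

lemma posSemidef_kronecker {A : Matrix n n ℂ} {B : Matrix m m ℂ}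
    (hA : A.PosSemidef) (hB : B.PosSemidef) : (A ⊗ₖ B).PosSemidef := by
  exact hA.kronecker hB

lemma traceNorm_kronecker (A : Matrix n n ℂ) (B : Matrix m m ℂ) :
    traceNorm (A ⊗ₖ B) = traceNorm A * traceNorm B := by
  set S := (Matrix.posSemidef_conjTranspose_mul_self A).sqrt with hSdef
  set T := (Matrix.posSemidef_conjTranspose_mul_self B).sqrt with hTdef
  have hS : S.PosSemidef := (Matrix.posSemidef_conjTranspose_mul_self A).posSemidef_sqrt
  have hT : T.PosSemidef := (Matrix.posSemidef_conjTranspose_mul_self B).posSemidef_sqrt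
  have h1 : (S ⊗ₖ T).PosSemidef := posSemidef_kronecker hS hT
  have h2 : (S ⊗ₖ T) ^ 2 = (A ⊗ₖ B)ᴴ * (A ⊗ₖ B) := by
    rw [pow_two, ← Matrix.mul_kronecker_mul, _root_.conjTranspose_kronecker, ← Matrix.mul_kronecker_mul,
      ← pow_two, ← pow_two, hSdef, hTdef,
      (Matrix.posSemidef_conjTranspose_mul_self A).sq_sqrt,
      (Matrix.posSemidef_conjTranspose_mul_self B).sq_sqrt]
  have h3 := h1.eq_sqrt_of_sq_eq (Matrix.posSemidef_conjTranspose_mul_self (A ⊗ₖ B)) h2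
  rw [traceNorm, ← h3, Matrix.trace_kronecker, herm_trace_real hS.1, herm_trace_real hT.1,
    ← Complex.ofReal_mul, Complex.ofReal_re]
  rfl

lemma posSemidef_trace_eq_zero {A : Matrix n n ℂ} (hA : A.PosSemidef) (h : A.trace = 0) :
    A = 0 := by
  have hall : ∀ i, hA.1.eigenvalues i = 0 := by
    have htr : A.trace = ∑ i, (hA.1.eigenvalues i : ℂ) := by
      rw [← trace_conjDiag hA.1 hA.1.eigenvalues, conjDiag_eigenvalues hA.1]
    rw [h] at htr
    have hr : ∑ i, hA.1.eigenvalues i = 0 := by exact_mod_cast htr.symm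
    intro i
    exact (Finset.sum_eq_zero_iff_of_nonneg
      (fun j _ => hA.eigenvalues_nonneg j)).mp hr i (Finset.mem_univ i)
  calc A = conjDiag hA.1 hA.1.eigenvalues := (conjDiag_eigenvalues hA.1).symm
    _ = 0 := by
      unfold conjDiag
      have : (Matrix.diagonal (fun i => ((hA.1.eigenvalues i : ℝ) : ℂ))) = 0 := by
        rw [show (fun i => ((hA.1.eigenvalues i : ℝ) : ℂ)) = fun _ => (0:ℂ) by
          funext i; rw [hall i]; simp, Matrix.diagonal_zero]
      rw [this, Matrix.mul_zero, Matrix.zero_mul]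

section Channels
variable {X Y : Type*} [Fintype X] [DecidableEq X] [Fintype Y] [DecidableEq Y]

lemma choi_apply (Φ : Matrix X X ℂ → Matrix Y Y ℂ) (y y' : Y) (a b : X) :
    ChoiMatrix Φ (y, a) (y', b) = Φ (Matrix.single a b 1) y y' := by
  unfold ChoiMatrix
  simp only [Matrix.sum_apply, Matrix.kroneckerMap_apply]
  rw [Finset.sum_eq_single a]
  · rw [Finset.sum_eq_single b]
    · rw [Matrix.single_apply_same, mul_one]
    · intro k _ hk
      simp [Matrix.single, hk]
    · simp
  · intro j _ hj
    apply Finset.sum_eq_zero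
    intro k _
    simp [Matrix.single, hj]
  · simp

lemma channel_herm (Φ : Matrix X X ℂ →ₗ[ℂ] Matrix Y Y ℂ)
    (hJ : (ChoiMatrix (⇑Φ)).IsHermitian) {M : Matrix X X ℂ} (hM : M.IsHermitian) :
    (Φ M).IsHermitian := by
  have hE : ∀ (a b : X), (Φ (Matrix.single a b 1))ᴴ = Φ (Matrix.single b a 1) := by
    intro a b
    ext y y'
    rw [Matrix.conjTranspose_apply]
    have h2 := congrFun (congrFun hJ.eq (y, b)) (y', a)
    rw [Matrix.conjTranspose_apply] at h2
    rw [← choi_apply (⇑Φ) y' y a b, ← choi_apply (⇑Φ) y y' b a]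
    exact h2
  have hexp : ∀ (P : Matrix X X ℂ), Φ P = ∑ a, ∑ b, P a b • Φ (Matrix.single a b 1) := by
    intro P
    conv_lhs => rw [Matrix.matrix_eq_sum_single P]
    rw [map_sum]
    apply Finset.sum_congr rfl; intro a _
    rw [map_sum]
    apply Finset.sum_congr rfl; intro b _
    rw [show Matrix.single a b (P a b) = P a b • Matrix.single a b 1 from by
      rw [Matrix.smul_single, smul_eq_mul, mul_one], _root_.map_smul]
  show (Φ M)ᴴ = Φ M
  conv_lhs => rw [hexp M]
  conv_rhs => rw [hexp M]
  simp only [Matrix.conjTranspose_sum, Matrix.conjTranspose_smul]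
  rw [Finset.sum_comm]
  apply Finset.sum_congr rfl; intro b _
  apply Finset.sum_congr rfl; intro a _
  rw [hE a b]
  congr 1
  have h3 := congrFun (congrFun hM.eq b) a
  rw [Matrix.conjTranspose_apply] at h3
  exact h3

end Channels

end AuxTraceNorm

/-- a separable input state gives no advantage over entanglement-free
strategies: there is a density operator `σ` on the input alone doing at least as well. -/
theorem separable_input_no_advantage
    {X Y Z : Type*} [Fintype X] [DecidableEq X] [Fintype Y] [DecidableEq Y]
    [Fintype Z] [DecidableEq Z]
    (Φ₀ Φ₁ : Matrix X X ℂ →ₗ[ℂ] Matrix Y Y ℂ)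
    (hΦ₀ : IsChannel Φ₀) (hΦ₁ : IsChannel Φ₁)
    (ρ : Matrix (X × Z) (X × Z) ℂ) (hρ : IsDensity ρ) (hρsep : SeparableOp ρ) :
    ∃ σ : Matrix X X ℂ, IsDensity σ ∧
      traceNorm (tensorId (fun M => Φ₀ M - Φ₁ M) ρ) ≤ traceNorm (Φ₀ σ - Φ₁ σ) := by
  obtain ⟨hρPSD, hρtr⟩ := hρ
  obtain ⟨N, Q, R, hQ, hR, hρeq⟩ := hρsep
  set Ψ : Matrix X X ℂ →ₗ[ℂ] Matrix Y Y ℂ := Φ₀ - Φ₁ with hΨdef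
  have hΨapp : ∀ M, Ψ M = Φ₀ M - Φ₁ M := fun M => LinearMap.sub_apply _ _ _
  -- the tensorId of ρ decomposes
  have htens : tensorId (fun M => Φ₀ M - Φ₁ M) ρ = ∑ i, (Ψ (Q i)) ⊗ₖ (R i) := by
    rw [hρeq]
    ext p q
    have hinner : (Matrix.of fun x x' => (∑ i, Q i ⊗ₖ R i) (x, p.2) (x', q.2))
        = ∑ i, (R i p.2 q.2) • Q i := by
      ext x x'
      simp only [Matrix.of_apply, Matrix.sum_apply, Matrix.kroneckerMap_apply,
        Matrix.smul_apply, smul_eq_mul]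
      exact Finset.sum_congr rfl fun i _ => mul_comm _ _
    show (fun M => Φ₀ M - Φ₁ M) _ p.1 q.1 = _
    have : (fun M => Φ₀ M - Φ₁ M) = ⇑Ψ := by
      funext M; rw [hΨapp]
    rw [this, hinner, map_sum]
    simp only [LinearMap.map_smul, Matrix.sum_apply, Matrix.smul_apply, smul_eq_mul,
      Matrix.kroneckerMap_apply]
    exact Finset.sum_congr rfl fun i _ => mul_comm _ _
  -- Hermiticity
  have hHerm : ∀ i, (Ψ (Q i)).IsHermitian := by
    intro i
    rw [hΨapp]
    exact ((channel_herm Φ₀ hΦ₀.2.1 (hQ i).1).sub (channel_herm Φ₁ hΦ₁.2.1 (hQ i).1))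
  have hHermK : ∀ i : Fin N, ((Ψ (Q i)) ⊗ₖ (R i)).IsHermitian := by
    intro i
    show _ᴴ = _
    rw [_root_.conjTranspose_kronecker, (hHerm i).eq, (hR i).1.eq]
  -- nonempty X
  have hXne : Nonempty X := by
    by_contra h
    rw [not_nonempty_iff] at h
    have h0 : ρ.trace = 0 := by
      rw [Matrix.trace]
      have : (Finset.univ : Finset (X × Z)) = ∅ := Finset.univ_eq_empty
      rw [this, Finset.sum_empty]
    rw [h0] at hρtr
    exact zero_ne_one hρtr
  have hcard : (Fintype.card X : ℂ) ≠ 0 := by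
    exact_mod_cast Fintype.card_ne_zero
  -- the default density operator
  set σ₀ : Matrix X X ℂ := (((Fintype.card X : ℝ)⁻¹ : ℝ) : ℂ) • (1 : Matrix X X ℂ) with hσ₀def
  have hσ₀ : IsDensity σ₀ := by
    constructor
    · exact posSemidef_smul_real Matrix.PosSemidef.one (inv_nonneg.mpr (Nat.cast_nonneg _))
    · rw [hσ₀def, Matrix.trace_smul, Matrix.trace_one, smul_eq_mul]
      push_cast
      exact inv_mul_cancel₀ hcard
  -- weights
  set q : Fin N → ℝ := fun i => ((Q i).trace.re) with hqdef
  set r : Fin N → ℝ := fun i => ((R i).trace.re) with hrdef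
  have hQtr : ∀ i, (Q i).trace = ((q i : ℝ) : ℂ) := fun i => herm_trace_real (hQ i).1
  have hRtr : ∀ i, (R i).trace = ((r i : ℝ) : ℂ) := fun i => herm_trace_real (hR i).1
  have hqnn : ∀ i, 0 ≤ q i := by
    intro i
    have := traceNorm_nonneg' (hQ i).1
    rwa [traceNorm_of_posSemidef (hQ i)] at this
  have hrnn : ∀ i, 0 ≤ r i := by
    intro i
    have := traceNorm_nonneg' (hR i).1
    rwa [traceNorm_of_posSemidef (hR i)] at this
  have hsum : ∑ i, q i * r i = 1 := by
    have h1 : ρ.trace = ∑ i, ((q i * r i : ℝ) : ℂ) := by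
      rw [hρeq, Matrix.trace_sum]
      apply Finset.sum_congr rfl
      intro i _
      rw [Matrix.trace_kronecker, hQtr, hRtr, ← Complex.ofReal_mul]
    rw [hρtr] at h1
    exact_mod_cast h1.symm
  -- the candidate densities
  set σf : Fin N → Matrix X X ℂ :=
    fun i => if q i = 0 then σ₀ else (((q i)⁻¹ : ℝ) : ℂ) • Q i with hσfdef
  have hσdens : ∀ i, IsDensity (σf i) := by
    intro i
    rw [hσfdef]
    dsimp only
    split_ifs with h
    · exact hσ₀
    · constructor
      · exact posSemidef_smul_real (hQ i) (inv_nonneg.mpr (hqnn i))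
      · rw [Matrix.trace_smul, hQtr, smul_eq_mul, ← Complex.ofReal_mul,
          inv_mul_cancel₀ h, Complex.ofReal_one]
  have hkey : ∀ i, traceNorm (Ψ (Q i)) = q i * traceNorm (Ψ (σf i)) := by
    intro i
    by_cases h : q i = 0
    · have hQ0 : Q i = 0 := by
        apply posSemidef_trace_eq_zero (hQ i)
        rw [hQtr, h, Complex.ofReal_zero]
      rw [hQ0, map_zero, h, zero_mul]
      rw [traceNorm_of_posSemidef Matrix.PosSemidef.zero, Matrix.trace_zero, Complex.zero_re]
    · have hq : Q i = ((q i : ℝ) : ℂ) • σf i := by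
        rw [hσfdef]
        dsimp only
        rw [if_neg h, smul_smul, ← Complex.ofReal_mul, mul_inv_cancel₀ h,
          Complex.ofReal_one, one_smul]
      conv_lhs => rw [hq]
      rw [LinearMap.map_smul, traceNorm_smul_real _ (hqnn i)]
  -- N is nonzero
  have hNne : Nonempty (Fin N) := by
    rcases Nat.eq_zero_or_pos N with h | h
    · exfalso
      subst h
      simp at hsum
    · exact ⟨⟨0, h⟩⟩
  obtain ⟨i₀, -, hmax⟩ := Finset.exists_max_image (Finset.univ : Finset (Fin N))
    (fun i => traceNorm (Ψ (σf i))) ⟨Classical.arbitrary _, Finset.mem_univ _⟩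
  refine ⟨σf i₀, hσdens i₀, ?_⟩
  have hfinal : Φ₀ (σf i₀) - Φ₁ (σf i₀) = Ψ (σf i₀) := (hΨapp _).symm
  rw [hfinal, htens]
  calc traceNorm (∑ i, (Ψ (Q i)) ⊗ₖ (R i))
      ≤ ∑ i, traceNorm ((Ψ (Q i)) ⊗ₖ (R i)) :=
        traceNorm_sum_le Finset.univ _ (fun i _ => hHermK i)
    _ = ∑ i, (q i * r i) * traceNorm (Ψ (σf i)) := by
        apply Finset.sum_congr rfl
        intro i _
        rw [traceNorm_kronecker, traceNorm_of_posSemidef (hR i), hkey i]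
        ring
    _ ≤ ∑ i, (q i * r i) * traceNorm (Ψ (σf i₀)) := by
        apply Finset.sum_le_sum
        intro i _
        exact mul_le_mul_of_nonneg_left (hmax i (Finset.mem_univ i))
          (mul_nonneg (hqnn i) (hrnn i))
    _ = traceNorm (Ψ (σf i₀)) := by
        rw [← Finset.sum_mul, hsum, one_mul]
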